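/- Let f₁, …, f_m : ℝⁿ → ℝ be differentiable functions with gradients ∇f_i, such that f_i(y) ≥ 0 for all y and all i, and each ∇f_i is Lipschitz with constant L_i ≥ 0; set f = Σ_{i=1}^m f_i. Let x* ∈ ℝⁿ satisfy f(x*) = 0. Fix x ∈ ℝⁿ, α ∈ ℝ, and define x⁺(i,j) ∈ ℝⁿ by x⁺(i,j)_j = x_j − α·(∇f_i(x))_j and x⁺(i,j)_k = x_k for k ≠ j. Then (1/(m·n))·Σ_{i=1}^m Σ_{j=1}^n f(x⁺(i,j)) ≤ f(x) − (α/(m·n))·‖∇f(x)‖² + (α²·(Σ_{ℓ=1}^m L_ℓ)/(2·m·n))·(Σ_{i=1}^m L_i²)·‖x − x*‖². (Intermediate bound (eq. intermmediate) in the proof of Theorem 5.) -/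

import Mathlib

open BigOperators

open InnerProductSpace

variable {E : Type*} [NormedAddCommGroup E] [InnerProductSpace ℝ E] [CompleteSpace E]

lemma descent_lemma (f : E → ℝ) (g : E → E) (hgrad : ∀ y, HasGradientAt f (g y) y)
    (L : ℝ) (hL : 0 ≤ L) (hlip : ∀ y z, ‖g y - g z‖ ≤ L * ‖y - z‖) (x y : E) :
    f y ≤ f x + inner ℝ (g x) (y - x) + L / 2 * ‖y - x‖ ^ 2 := by
  set v := y - x with hv
  have hgc : Continuous g := by
    rcases eq_or_lt_of_le hL with h0 | h0
    · have hg : ∀ z, g z = g 0 := fun z => by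
        have h := hlip z 0; rw [← h0, zero_mul] at h
        have h' : ‖g z - g 0‖ = 0 := le_antisymm h (norm_nonneg _)
        rwa [norm_eq_zero, sub_eq_zero] at h'
      exact continuous_const.congr fun z => (hg z).symm
    · exact (LipschitzWith.of_dist_le_mul (fun a b => by
        rw [Real.coe_toNNReal L hL]
        simpa [dist_eq_norm] using hlip a b)).continuous
  have hline : ∀ t : ℝ, HasDerivAt (fun s : ℝ => f (x + s • v)) (inner ℝ (g (x + t • v)) v) t := by
    intro t
    have h1 : HasDerivAt (fun s : ℝ => x + s • v) v t := by
      simpa using ((hasDerivAt_id t).smul_const v).const_add x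
    have h2 := (hgrad (x + t • v)).hasFDerivAt.comp_hasDerivAt t h1
    simpa [toDual_apply_apply, Function.comp_def] using h2
  have hcont : Continuous fun t : ℝ => (inner ℝ (g (x + t • v)) v : ℝ) :=
    (hgc.comp (by continuity)).inner continuous_const
  have hFTC : ∫ t in (0:ℝ)..1, (inner ℝ (g (x + t • v)) v : ℝ) = f (x + (1:ℝ) • v) - f (x + (0:ℝ) • v) := by
    exact intervalIntegral.integral_eq_sub_of_hasDerivAt
      (fun t _ => hline t) (hcont.intervalIntegrable 0 1)
  have hxy : x + (1:ℝ) • v = y := by simp [hv]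
  have hx0 : x + (0:ℝ) • v = x := by simp
  rw [hxy, hx0] at hFTC
  have hbound : ∀ t ∈ Set.Icc (0:ℝ) 1,
      (inner ℝ (g (x + t • v)) v : ℝ) ≤ inner ℝ (g x) v + L * t * ‖v‖ ^ 2 := by
    intro t ht
    have h1 : (inner ℝ (g (x + t • v)) v : ℝ) - inner ℝ (g x) v = inner ℝ (g (x + t • v) - g x) v := by
      rw [inner_sub_left]
    have h2 : (inner ℝ (g (x + t • v) - g x) v : ℝ) ≤ ‖g (x + t • v) - g x‖ * ‖v‖ :=
      real_inner_le_norm _ _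
    have h3 : ‖g (x + t • v) - g x‖ ≤ L * (t * ‖v‖) := by
      have := hlip (x + t • v) x
      simpa [norm_smul, abs_of_nonneg ht.1] using this
    nlinarith [norm_nonneg v, norm_nonneg (g (x + t • v) - g x)]
  have hint : ∫ t in (0:ℝ)..1, (inner ℝ (g (x + t • v)) v : ℝ) ≤
      ∫ t in (0:ℝ)..1, (inner ℝ (g x) v + L * t * ‖v‖ ^ 2) := by
    apply intervalIntegral.integral_mono_on zero_le_one (hcont.intervalIntegrable 0 1)
      ((by continuity : Continuous fun t : ℝ => (inner ℝ (g x) v : ℝ) + L * t * ‖v‖ ^ 2).intervalIntegrable 0 1)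
      hbound
  have hval : ∫ t in (0:ℝ)..1, ((inner ℝ (g x) v : ℝ) + L * t * ‖v‖ ^ 2) =
      inner ℝ (g x) v + L / 2 * ‖v‖ ^ 2 := by
    have heq : (fun t : ℝ => (inner ℝ (g x) v : ℝ) + L * t * ‖v‖ ^ 2)
        = fun t : ℝ => (inner ℝ (g x) v : ℝ) + (L * ‖v‖ ^ 2) * t := by
      funext t; ring
    rw [heq, intervalIntegral.integral_add (intervalIntegrable_const)
      ((intervalIntegral.intervalIntegrable_id).const_mul (L * ‖v‖ ^ 2)),
      intervalIntegral.integral_const_mul, integral_id]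
    simp; ring
  rw [hval] at hint
  linarith [hFTC ▸ hint]

lemma grad_zero_of_min (f : E → ℝ) (gr : E) (x : E) (hg : HasGradientAt f gr x)
    (hmin : ∀ y, f x ≤ f y) : gr = 0 := by
  have hloc : IsLocalMin f x := Filter.Eventually.of_forall hmin
  have h0 : toDual ℝ E gr = 0 := hloc.hasFDerivAt_eq_zero hg.hasFDerivAt
  have := congrArg (toDual ℝ E).symm h0
  simpa using this

lemma euclid_sum_mul_self {n : ℕ} (v : EuclideanSpace ℝ (Fin n)) :
    ∑ j, v j * v j = ‖v‖ ^ 2 := by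
  rw [← real_inner_self_eq_norm_sq, PiLp.inner_apply]
  simp [RCLike.inner_apply, pow_two]

lemma euclid_update_sub {n : ℕ} (x : EuclideanSpace ℝ (Fin n)) (j : Fin n) (c : ℝ) :
    (WithLp.toLp 2 (Function.update x j (x j - c))) - x
      = EuclideanSpace.single j (-c) := by
  apply PiLp.ext
  intro k
  by_cases h : k = j
  · subst h; simp [Function.update_apply, EuclideanSpace.single_apply]
  · simp [Function.update_apply, EuclideanSpace.single_apply, h]

/-- intermediate bound (eq. intermmediate) in the proof of Theorem 5.
With `f = Σᵢ fᵢ`, where each `fᵢ : ℝⁿ → ℝ` is nonnegative with `Lᵢ`-Lipschitz gradient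
`gᵢ`, and `f(x*) = 0`, for every `x` and `α` the averaged value of `f` over all doubly
stochastic gradient updates `x⁺(i,j)` satisfies
`(1/(mn)) Σᵢⱼ f(x⁺(i,j)) ≤ f(x) - (α/(mn)) ‖∇f(x)‖² + (α² (Σ Lℓ)/(2mn)) (Σ Lᵢ²) ‖x - x*‖²`. -/
theorem dsg_intermediate_bound {m n : ℕ}
    (f : Fin m → EuclideanSpace ℝ (Fin n) → ℝ)
    (g : Fin m → EuclideanSpace ℝ (Fin n) → EuclideanSpace ℝ (Fin n))
    (hgrad : ∀ i y, HasGradientAt (f i) (g i y) y)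
    (hnonneg : ∀ i y, 0 ≤ f i y)
    (L : Fin m → ℝ) (hL : ∀ i, 0 ≤ L i)
    (hlip : ∀ i y z, ‖g i y - g i z‖ ≤ L i * ‖y - z‖)
    (xstar : EuclideanSpace ℝ (Fin n)) (hmin : ∑ i, f i xstar = 0)
    (x : EuclideanSpace ℝ (Fin n)) (α : ℝ) :
    (1 / ((m : ℝ) * n)) *
        ∑ i, ∑ j, (∑ l, f l (WithLp.toLp 2 (Function.update x j (x j - α * g i x j)))) ≤
      ∑ i, f i x - (α / ((m : ℝ) * n)) * ‖∑ i, g i x‖ ^ 2 +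
        (α ^ 2 * (∑ l, L l) / (2 * (m : ℝ) * n)) * (∑ i, L i ^ 2) *
          ‖x - xstar‖ ^ 2 := by
  classical
  -- trivial dimension cases
  rcases Nat.eq_zero_or_pos m with hm | hm
  · subst hm; simp
  rcases Nat.eq_zero_or_pos n with hn | hn
  · subst hn
    have hz : ∀ v : EuclideanSpace ℝ (Fin 0), ‖v‖ = 0 := fun v => by
      rw [EuclideanSpace.norm_eq]; simp
    simp only [Finset.univ_eq_empty, Finset.sum_empty, Finset.sum_const, hz]
    simp only [mul_zero, Nat.cast_zero]
    rw [show ((0:ℝ))^2 = 0 by norm_num]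
    simp
    exact Finset.sum_nonneg fun i _ => hnonneg i x
  -- gradients vanish at xstar
  have gzero : ∀ i, g i xstar = 0 := by
    intro i
    have hfi : f i xstar = 0 :=
      (Finset.sum_eq_zero_iff_of_nonneg (fun l _ => hnonneg l xstar)).1 hmin i (Finset.mem_univ i)
    refine grad_zero_of_min (f i) _ xstar (hgrad i xstar) fun y => ?_
    rw [hfi]; exact hnonneg i y
  set F : ℝ := ∑ l, f l x with hF
  set K : ℝ := ∑ l, L l with hK
  have hK0 : 0 ≤ K := Finset.sum_nonneg fun l _ => hL l
  -- per-(i,j) descent bound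
  have key : ∀ (i : Fin m) (j : Fin n),
      (∑ l, f l (WithLp.toLp 2 (Function.update x j (x j - α * g i x j))))
        ≤ F - (α * g i x j) * (∑ l, g l x j) + K / 2 * (α * g i x j) ^ 2 := by
    intro i j
    set c : ℝ := α * g i x j with hc
    have h1 : ∀ l, f l (WithLp.toLp 2 (Function.update x j (x j - c))) ≤
        f l x + g l x j * (-c) + L l / 2 * c ^ 2 := by
      intro l
      have hd := descent_lemma (f l) (g l) (hgrad l) (L l) (hL l) (hlip l) x
        (WithLp.toLp 2 (Function.update x j (x j - c)))
      rw [euclid_update_sub x j c] at hd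
      have hi : (inner ℝ (g l x) (EuclideanSpace.single j (-c)) : ℝ) = g l x j * (-c) := by
        simp [EuclideanSpace.inner_single_right, mul_comm]
      have hn2 : ‖EuclideanSpace.single j (-c)‖ ^ 2 = c ^ 2 := by
        rw [EuclideanSpace.norm_single]; simp [sq_abs]
      rw [hi, hn2] at hd
      exact hd
    calc ∑ l, f l (WithLp.toLp 2 (Function.update x j (x j - c)))
        ≤ ∑ l, (f l x + g l x j * (-c) + L l / 2 * c ^ 2) :=
          Finset.sum_le_sum fun l _ => h1 l
      _ = F - c * (∑ l, g l x j) + K / 2 * c ^ 2 := by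
          rw [Finset.sum_add_distrib, Finset.sum_add_distrib, ← Finset.sum_mul,
            ← Finset.sum_mul, ← Finset.sum_div]
          ring
  -- norm identities
  have hGnorm : ∑ j, (∑ l, g l x j) * (∑ l, g l x j) = ‖∑ l, g l x‖ ^ 2 := by
    have happ : ∀ j, (∑ l, g l x) j = ∑ l, g l x j := fun j =>
      by rw [WithLp.ofLp_sum, Finset.sum_apply]
    rw [← euclid_sum_mul_self (∑ l, g l x)]
    exact Finset.sum_congr rfl fun j _ => by rw [happ]
  -- second moment bound
  have hB : ∑ i, ∑ j, g i x j * g i x j ≤ (∑ i, L i ^ 2) * ‖x - xstar‖ ^ 2 := by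
    rw [Finset.sum_mul]
    refine Finset.sum_le_sum fun i _ => ?_
    rw [euclid_sum_mul_self (g i x)]
    have h := hlip i x xstar
    rw [gzero i, sub_zero] at h
    have h2 : ‖g i x‖ ^ 2 ≤ (L i * ‖x - xstar‖) ^ 2 := pow_le_pow_left₀ (norm_nonneg _) h 2
    calc ‖g i x‖ ^ 2 ≤ (L i * ‖x - xstar‖) ^ 2 := h2
      _ = L i ^ 2 * ‖x - xstar‖ ^ 2 := by ring
  -- expand the double sum
  have p2 : ∑ i, ∑ j, (α * g i x j) * (∑ l, g l x j)
      = α * ∑ j, (∑ l, g l x j) * (∑ l, g l x j) := by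
    rw [Finset.sum_comm, Finset.mul_sum]
    refine Finset.sum_congr rfl fun j _ => ?_
    calc ∑ i, (α * g i x j) * (∑ l, g l x j)
        = ∑ i, (α * (∑ l, g l x j)) * g i x j :=
          Finset.sum_congr rfl fun i _ => by ring
      _ = (α * (∑ l, g l x j)) * ∑ i, g i x j := (Finset.mul_sum _ _ _).symm
      _ = α * ((∑ l, g l x j) * (∑ l, g l x j)) := by ring
  have p3 : ∑ i, ∑ j, K / 2 * (α * g i x j) ^ 2
      = K / 2 * α ^ 2 * ∑ i, ∑ j, g i x j * g i x j := by
    rw [Finset.mul_sum]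
    refine Finset.sum_congr rfl fun i _ => ?_
    rw [Finset.mul_sum]
    exact Finset.sum_congr rfl fun j _ => by ring
  have expand : ∑ i, ∑ j, (F - (α * g i x j) * (∑ l, g l x j) + K / 2 * (α * g i x j) ^ 2)
      = (m : ℝ) * n * F - α * ‖∑ l, g l x‖ ^ 2
        + K / 2 * α ^ 2 * ∑ i, ∑ j, g i x j * g i x j := by
    simp only [Finset.sum_add_distrib, Finset.sum_sub_distrib]
    rw [p2, p3, hGnorm]
    simp [Finset.sum_const, mul_assoc]
  -- total bound
  have total : ∑ i, ∑ j, (∑ l, f l (WithLp.toLp 2 (Function.update x j (x j - α * g i x j))))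
      ≤ (m : ℝ) * n * F - α * ‖∑ l, g l x‖ ^ 2
        + K / 2 * α ^ 2 * ((∑ i, L i ^ 2) * ‖x - xstar‖ ^ 2) := by
    calc ∑ i, ∑ j, (∑ l, f l (WithLp.toLp 2 (Function.update x j (x j - α * g i x j))))
        ≤ ∑ i, ∑ j, (F - (α * g i x j) * (∑ l, g l x j) + K / 2 * (α * g i x j) ^ 2) :=
          Finset.sum_le_sum fun i _ => Finset.sum_le_sum fun j _ => key i j
      _ = (m : ℝ) * n * F - α * ‖∑ l, g l x‖ ^ 2
          + K / 2 * α ^ 2 * ∑ i, ∑ j, g i x j * g i x j := expand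
      _ ≤ _ := by
          have hc : 0 ≤ K / 2 * α ^ 2 := by positivity
          have := mul_le_mul_of_nonneg_left hB hc
          linarith
  -- divide by m*n
  have hN : (0:ℝ) < (m : ℝ) * n :=
    mul_pos (by exact_mod_cast hm) (by exact_mod_cast hn)
  calc (1 / ((m : ℝ) * n)) *
        ∑ i, ∑ j, (∑ l, f l (WithLp.toLp 2 (Function.update x j (x j - α * g i x j))))
      ≤ (1 / ((m : ℝ) * n)) *
          ((m : ℝ) * n * F - α * ‖∑ l, g l x‖ ^ 2
            + K / 2 * α ^ 2 * ((∑ i, L i ^ 2) * ‖x - xstar‖ ^ 2)) :=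
        mul_le_mul_of_nonneg_left total (by positivity)
    _ = ∑ i, f i x - (α / ((m : ℝ) * n)) * ‖∑ i, g i x‖ ^ 2 +
        (α ^ 2 * (∑ l, L l) / (2 * (m : ℝ) * n)) * (∑ i, L i ^ 2) *
          ‖x - xstar‖ ^ 2 := by
        rw [hF, hK]
        field_simp
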